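/- Let G be a group. Any family of pairwise disjoint shifted subgroups of finite index of G (sets of the form aHb with [G:H] finite) is at most countable. -/

import Mathlib

open Pointwise

private lemma coset_card_key {G : Type*} [Group G] (n : ℕ) (hn : n ≠ 0) (S : Finset (Set G))
    (h : ∀ A ∈ S, ∃ (K : Subgroup G) (c : G), K.index = n ∧ A = (· * c) '' (K : Set G))
    (hd : (S : Set (Set G)).PairwiseDisjoint id) : S.card ≤ n := by
  classical
  choose K c hind heq using fun (A : S) => h A A.2
  haveI hinf : (⨅ A : S, K A).FiniteIndex :=
    Subgroup.finiteIndex_iInf fun A => ⟨by rw [hind A]; exact hn⟩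
  set M := (⨅ A : S, K A).normalCore with hMdef
  haveI : M.FiniteIndex := Subgroup.finiteIndex_normalCore (⨅ A : S, K A)
  haveI : M.Normal := Subgroup.normalCore_normal _
  haveI : Finite (G ⧸ M) := by
    refine Nat.finite_of_card_ne_zero ?_
    exact Subgroup.FiniteIndex.index_ne_zero (H := M)
  haveI : Fintype (G ⧸ M) := Fintype.ofFinite _
  set π := QuotientGroup.mk' M with hπ
  have hMK : ∀ A : S, M ≤ K A := fun A =>
    (Subgroup.normalCore_le _).trans (iInf_le _ A)
  have hfib : ∀ A : S, π ⁻¹' (π '' (A : Set G)) = (A : Set G) := by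
    intro A
    apply Set.Subset.antisymm
    · rintro x ⟨y, hy, hxy⟩
      rw [heq A] at hy ⊢
      obtain ⟨k, hk, rfl⟩ := hy
      obtain ⟨z, hz, hxz⟩ := (QuotientGroup.mk'_eq_mk' M).mp hxy
      refine ⟨k * (c A * z * (c A)⁻¹),
        mul_mem hk (hMK A (Subgroup.Normal.conj_mem ‹M.Normal› _ hz _)), ?_⟩
      simp only at hxz ⊢
      rw [← hxz]; group
    · exact Set.subset_preimage_image _ _
  set T : S → Finset (G ⧸ M) := fun A => (π '' (A : Set G)).toFinset with hT
  have hcardT : ∀ A : S, n * (T A).card = Nat.card (G ⧸ M) := by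
    intro A
    have himg : π '' (A : Set G) = (· * π (c A)) '' (((K A).map π : Subgroup (G ⧸ M)) : Set (G ⧸ M)) := by
      rw [heq A, Subgroup.coe_map, ← Set.image_comp, ← Set.image_comp]
      apply Set.image_congr'
      intro x; simp [Function.comp]
    have h1 : (T A).card = (π '' (A : Set G)).ncard := by
      rw [hT]; simp [Set.ncard_eq_toFinset_card']
    have h2 : (π '' (A : Set G)).ncard = Nat.card ((K A).map π) := by
      rw [himg, Set.ncard_image_of_injective _ (mul_left_injective _),
        ← Nat.card_coe_set_eq]
      rfl
    have h3 : ((K A).map π).index = n := by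
      rw [Subgroup.index_map_eq _ (QuotientGroup.mk'_surjective M)
        (by rw [QuotientGroup.ker_mk']; exact hMK A), hind A]
    have := Subgroup.index_mul_card ((K A).map π)
    rw [h1, h2, ← h3]
    exact this
  have hTdisj : ∀ A ∈ S.attach, ∀ B ∈ S.attach, A ≠ B → Disjoint (T A) (T B) := by
    intro A _ B _ hAB
    rw [Finset.disjoint_left]
    intro q hqA hqB
    rw [hT] at hqA hqB
    simp only [Set.mem_toFinset] at hqA hqB
    obtain ⟨x, hx, rfl⟩ := hqA
    have hxB : x ∈ (B : Set G) := by
      rw [← hfib B]; exact hqB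
    have hABne : (A : Set G) ≠ (B : Set G) := fun hc => hAB (Subtype.coe_injective hc)
    exact Set.disjoint_left.mp (hd A.2 B.2 hABne) hx hxB
  have hsum : ∑ A ∈ S.attach, (T A).card ≤ Fintype.card (G ⧸ M) := by
    rw [← Finset.card_biUnion hTdisj]
    exact Finset.card_le_card (Finset.subset_univ _) |>.trans (le_of_eq (Finset.card_univ))
  have hm : Nat.card (G ⧸ M) = Fintype.card (G ⧸ M) := Nat.card_eq_fintype_card
  have hfinal : S.card * Nat.card (G ⧸ M) ≤ n * Nat.card (G ⧸ M) := by
    calc S.card * Nat.card (G ⧸ M) = ∑ A ∈ S.attach, Nat.card (G ⧸ M) := by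
          simp [Finset.card_attach, mul_comm]
      _ = ∑ A ∈ S.attach, n * (T A).card := by
          exact Finset.sum_congr rfl fun A _ => (hcardT A).symm
      _ = n * ∑ A ∈ S.attach, (T A).card := by rw [Finset.mul_sum]
      _ ≤ n * Nat.card (G ⧸ M) := by
          rw [hm]; exact Nat.mul_le_mul_left n hsum
  have hmpos : 0 < Nat.card (G ⧸ M) :=
    Nat.pos_of_ne_zero (Subgroup.FiniteIndex.index_ne_zero (H := M))
  exact Nat.le_of_mul_le_mul_right hfinal hmpos

theorem disjoint_shifted_subgroups_countable {G : Type*} [Group G]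
    (P : Set (Set G))
    (hshift : ∀ A ∈ P, ∃ (a b : G) (H : Subgroup G), H.FiniteIndex ∧
      A = {a} * (H : Set G) * {b})
    (hdisj : P.PairwiseDisjoint id) :
    P.Countable := by
  classical
  -- rewrite each A as a right coset of a finite-index subgroup
  have hcoset : ∀ A ∈ P, ∃ (K : Subgroup G) (c : G), K.index ≠ 0 ∧
      A = (· * c) '' (K : Set G) := by
    intro A hA
    obtain ⟨a, b, H, hH, rfl⟩ := hshift A hA
    refine ⟨H.map (MulAut.conj a).toMonoidHom, a * b, ?_, ?_⟩
    · rw [Subgroup.index_map_of_injective _ (MulAut.conj a).injective]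
      rw [MonoidHom.range_eq_top_of_surjective _ (MulAut.conj a).surjective]
      simp [hH.index_ne_zero]
    · rw [Subgroup.coe_map, Set.singleton_mul, Set.mul_singleton, Set.image_image,
        ← Set.image_comp]
      apply Set.image_congr'
      intro x; simp [Function.comp]
  have hP : P ⊆ ⋃ n : ℕ, {A ∈ P | ∃ (K : Subgroup G) (c : G), K.index = n ∧ n ≠ 0 ∧
      A = (· * c) '' (K : Set G)} := by
    intro A hA
    obtain ⟨K, cc, hK, hAe⟩ := hcoset A hA
    exact Set.mem_iUnion.mpr ⟨K.index, hA, K, cc, rfl, hK, hAe⟩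
  refine Set.Countable.mono hP (Set.countable_iUnion fun n => ?_)
  by_cases hn : n = 0
  · subst hn
    have : {A ∈ P | ∃ (K : Subgroup G) (c : G), K.index = 0 ∧ (0:ℕ) ≠ 0 ∧
        A = (· * c) '' (K : Set G)} = ∅ := by
      ext A; simp
    rw [this]; exact Set.countable_empty
  refine Set.Finite.countable ?_
  rw [← Set.not_infinite]
  intro hinf
  obtain ⟨S, hSsub, hScard⟩ := hinf.exists_subset_card_eq (n + 1)
  have hle : S.card ≤ n := by
    refine coset_card_key n hn S ?_ ?_
    · intro A hA
      obtain ⟨-, K, cc, hKn, -, hAe⟩ := hSsub hA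
      exact ⟨K, cc, hKn, hAe⟩
    · exact hdisj.subset (fun A hA => (hSsub hA).1)
  omega
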